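/- If a labeled tree T is 12-representable, then for every vertex v of T, at most two of the connected components of T minus v fail to be 'good', where a component containing neighbor v_i of v is good if it is a star whose center is v_i. -/

import Mathlib

/-- A word has no 12-match iff no two consecutive letters form a strictly
increasing pair. -/
def NoMatch12 (w : List ℕ) : Prop := w.Chain' (fun a b => b ≤ a)

/-- `w` 12-represents the graph `G` under the injective labeling `ℓ` of its
vertices by natural numbers: every label occurs in `w`, every letter of `w` is a
label, and for distinct vertices `x, y`: `x y` is an edge iff the subsequence of
`w` consisting of occurrences of `ℓ x` and `ℓ y` has no 12-match. -/
def Rep12L {α : Type*} [Fintype α] (G : SimpleGraph α) (ℓ : α → ℕ)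
    (w : List ℕ) : Prop :=
  Function.Injective ℓ ∧ (∀ v : α, ℓ v ∈ w) ∧ (∀ a ∈ w, ∃ v : α, a = ℓ v) ∧
    ∀ x y : α, x ≠ y →
      (G.Adj x y ↔ NoMatch12 (w.filter (fun a => a = ℓ x ∨ a = ℓ y)))

/-- The component of `T ∖ v` containing the neighbor `u` of `v` (its vertices are
those `x` reachable from `u` by a walk avoiding `v`) is *good*: it is a star with
center `u`, i.e. every vertex of the component other than `u` is adjacent to `u`,
and no two vertices of the component other than `u` are adjacent. -/
def IsGoodComp {α : Type*} (T : SimpleGraph α) (v u : α) : Prop :=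
  (∀ x, (∃ p : T.Walk u x, v ∉ p.support) → (x = u ∨ T.Adj u x)) ∧
    (∀ x y, (∃ p : T.Walk u x, v ∉ p.support) → (∃ q : T.Walk u y, v ∉ q.support) →
      x ≠ u → y ≠ u → ¬ T.Adj x y)

set_option maxHeartbeats 2000000
set_option linter.unusedVariables false
set_option linter.unusedSectionVars false

namespace Stmt17
open List

open List

def Fi (w : List ℕ) (p : ℕ) : ℕ := w.idxOf p
def Li (w : List ℕ) (p : ℕ) : ℕ := w.length - 1 - w.reverse.idxOf p

lemma Fi_lt {w : List ℕ} {p : ℕ} (hp : p ∈ w) : Fi w p < w.length :=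
  idxOf_lt_length_iff.2 hp

lemma getElem_Fi {w : List ℕ} {p : ℕ} (hp : p ∈ w) : w[Fi w p]'(Fi_lt hp) = p :=
  getElem_idxOf (Fi_lt hp)

lemma Fi_min {w : List ℕ} {p : ℕ} {i : ℕ} (hi : i < w.length) (he : w[i] = p) :
    Fi w p ≤ i := by
  by_contra h
  push_neg at h
  have h2 : i < findIdx (· == p) w := by simpa [Fi, List.idxOf] using h
  have := List.not_of_lt_findIdx h2
  simp_all

lemma Li_lt {w : List ℕ} {p : ℕ} (hp : p ∈ w) : Li w p < w.length := by
  have : 0 < w.length := length_pos_iff.2 (by rintro rfl; simp at hp)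
  unfold Li; omega

lemma getElem_Li {w : List ℕ} {p : ℕ} (hp : p ∈ w) : w[Li w p]'(Li_lt hp) = p := by
  have hpr : p ∈ w.reverse := mem_reverse.2 hp
  have hk : w.reverse.idxOf p < w.reverse.length := idxOf_lt_length_iff.2 hpr
  have h1 : w.reverse[w.reverse.idxOf p]'hk = p := getElem_idxOf hk
  rw [List.getElem_reverse] at h1
  have : w.length - 1 - w.reverse.idxOf p = Li w p := rfl
  simp only [length_reverse] at h1 hk
  convert h1 using 2
  exact this.symm

lemma Li_max {w : List ℕ} {p : ℕ} {i : ℕ} (hi : i < w.length) (he : w[i] = p) :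
    i ≤ Li w p := by
  by_contra h
  push_neg at h
  have hp : p ∈ w := he ▸ getElem_mem hi
  have hk : w.reverse.idxOf p < w.reverse.length :=
    idxOf_lt_length_iff.2 (mem_reverse.2 hp)
  simp only [length_reverse] at hk
  have hj : w.length - 1 - i < w.reverse.idxOf p := by unfold Li at h; omega
  have hjl : w.length - 1 - i < w.reverse.length := by simp; omega
  have he2 : w.reverse[w.length - 1 - i]'hjl = p := by
    rw [List.getElem_reverse]
    have h3 : w.length - 1 - (w.length - 1 - i) = i := by omega
    simp_all
  have := Fi_min (w := w.reverse) hjl he2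
  unfold Fi at this; omega

lemma Fi_le_Li {w : List ℕ} {p : ℕ} (hp : p ∈ w) : Fi w p ≤ Li w p :=
  Fi_min (Li_lt hp) (getElem_Li hp)

lemma pair_sublist_of {w : List ℕ} {i j : ℕ} (hij : i < j) (hj : j < w.length) :
    [w[i]'(lt_trans hij hj), w[j]] <+ w := by
  have hi : i < w.length := lt_trans hij hj
  have h1 : [w[i]] <+ w.take j := by
    rw [singleton_sublist]
    have hi' : i < (w.take j).length := by simp; omega
    have h := List.getElem_take (xs := w) (j := j) (i := i) (h := hi')
    exact h ▸ getElem_mem hi'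
  have h2 : [w[j]] <+ w.drop j := by
    rw [singleton_sublist]
    have hj' : 0 < (w.drop j).length := by simp; omega
    have h := List.getElem_drop (xs := w) (i := j) (j := 0) (h := hj')
    simp only [Nat.add_zero] at h
    exact h ▸ getElem_mem hj'
  have h3 := Sublist.append h1 h2
  simpa [take_append_drop] using h3

lemma exists_of_pair_sublist {w : List ℕ} {p q : ℕ} (h : [p, q] <+ w) :
    ∃ i j, ∃ (hi : i < w.length) (hj : j < w.length), i < j ∧ w[i] = p ∧ w[j] = q := by
  induction w with
  | nil => simp at h
  | cons c t ih =>
    cases h with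
    | cons c h' => ?_
    | cons_cons c h' => ?_
    ·
      obtain ⟨i, j, hi, hj, hij, hp, hq⟩ := ih h'
      exact ⟨i + 1, j + 1, by simpa using hi, by simpa using hj, by omega, by simpa using hp,
        by simpa using hq⟩
    ·
      obtain ⟨k, hk, hkq⟩ := getElem_of_mem (singleton_sublist.1 h')
      exact ⟨0, k + 1, by simp, by simpa using hk, by omega, by simp,
        by simpa using hkq⟩

lemma before_iff {w : List ℕ} {p q : ℕ} (hne : p ≠ q) (hp : p ∈ w) (hq : q ∈ w) :
    [p, q] <+ w ↔ Fi w p < Li w q := by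
  constructor
  · rintro h
    obtain ⟨i, j, hi, hj, hij, hpe, hqe⟩ := exists_of_pair_sublist h
    have h1 := Fi_min hi hpe
    have h2 := Li_max hj hqe
    omega
  · intro h
    have hj := Li_lt hq
    have := pair_sublist_of h hj
    rwa [getElem_Fi hp, getElem_Li hq] at this

lemma char {w : List ℕ} {p q : ℕ} (hpq : p < q) (hp : p ∈ w) (hq : q ∈ w) :
    NoMatch12 (w.filter (fun a => a = p ∨ a = q)) ↔ Li w q < Fi w p := by
  have hne : p ≠ q := Nat.ne_of_lt hpq
  haveI : IsTrans ℕ (fun a b => b ≤ a) := ⟨fun _ _ _ h1 h2 => le_trans h2 h1⟩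
  constructor
  · intro hnm
    by_contra hno
    push_neg at hno
    have hfl : Fi w p ≠ Li w q := by
      intro he
      have h1 := getElem_Fi hp
      have h2 := getElem_Li hq
      simp only [he] at h1
      rw [h1] at h2
      exact hne h2
    have hlt : Fi w p < Li w q := by omega
    have hsub : [p, q] <+ w := (before_iff hne hp hq).2 hlt
    have hsub2 : [p, q] <+ w.filter (fun a => a = p ∨ a = q) := by
      have := List.Sublist.filter (fun a => decide (a = p ∨ a = q)) hsub
      simpa using this
    have hpw : List.Pairwise (fun a b => b ≤ a) (w.filter (fun a => a = p ∨ a = q)) :=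
      List.isChain_iff_pairwise.1 hnm
    have := hpw.sublist hsub2
    simp at this
    omega
  · intro hlt
    by_contra hnc
    set l := w.filter (fun a => a = p ∨ a = q) with hl
    have hnc' : ¬ l.Chain' (fun a b => b ≤ a) := hnc
    change ¬ l.IsChain (fun a b => b ≤ a) at hnc'
    rw [List.isChain_iff_getElem] at hnc'
    push_neg at hnc'
    obtain ⟨i, hi, hlt2⟩ := hnc'
    have hi1 : i < l.length := by omega
    have hi2 : i + 1 < l.length := by omega
    have hm1 : l[i] = p ∨ l[i] = q := by
      have := List.of_mem_filter (getElem_mem hi1)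
      simpa using this
    have hm2 : l[i+1] = p ∨ l[i+1] = q := by
      have := List.of_mem_filter (getElem_mem hi2)
      simpa using this
    have hip : l[i] = p := by rcases hm1 with h | h <;> rcases hm2 with h' | h' <;> omega
    have hiq : l[i+1] = q := by rcases hm1 with h | h <;> rcases hm2 with h' | h' <;> omega
    have hsub : [p, q] <+ l := by
      have := pair_sublist_of (i := i) (j := i + 1) (by omega) hi2
      rwa [hip, hiq] at this
    have hsubw : [p, q] <+ w := hsub.trans (List.filter_sublist (l := w))
    have := (before_iff hne hp hq).1 hsubw
    omega


section Graph
open SimpleGraph Walk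

variable {α : Type*} [DecidableEq α] {T : SimpleGraph α}

open SimpleGraph Walk

variable {α : Type*} [DecidableEq α] {T : SimpleGraph α}

lemma path_unique (hT : T.IsTree) {x y : α} (p q : T.Walk x y)
    (hp : p.IsPath) (hq : q.IsPath) : p = q := by
  have := SimpleGraph.isAcyclic_iff_path_unique.1 hT.IsAcyclic (⟨p, hp⟩ : T.Path x y) ⟨q, hq⟩
  exact congrArg Subtype.val this

lemma no_triangle (hT : T.IsTree) {x y z : α} (h1 : T.Adj x y) (h2 : T.Adj y z)
    (h3 : T.Adj x z) : False := by
  have hxy := h1.ne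
  have hyz := h2.ne
  have hxz := h3.ne
  have hp : (Walk.cons h3 Walk.nil : T.Walk x z).IsPath := by
    simp [Walk.isPath_def, hxz]
  have hq : (Walk.cons h1 (Walk.cons h2 Walk.nil) : T.Walk x z).IsPath := by
    simp [Walk.isPath_def, hxy, hyz, hxz]
  have := path_unique hT _ _ hp hq
  simpa using congrArg Walk.length this

lemma no_square (hT : T.IsTree) {v u a b : α} (h1 : T.Adj v u) (h2 : T.Adj u a)
    (h3 : T.Adj a b) (h4 : T.Adj v b) (hva : v ≠ a) (hub : u ≠ b) : False := by
  have hp : (Walk.cons h4 Walk.nil : T.Walk v b).IsPath := by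
    simp [Walk.isPath_def, h4.ne]
  have hq : (Walk.cons h1 (Walk.cons h2 (Walk.cons h3 Walk.nil)) : T.Walk v b).IsPath := by
    simp [Walk.isPath_def, h1.ne, h2.ne, h3.ne, hva, hub, h4.ne]
  have := path_unique hT _ _ hp hq
  simpa using congrArg Walk.length this

lemma comp_disj (hT : T.IsTree) {v u₁ u₂ x : α} (hu1 : T.Adj v u₁) (hu2 : T.Adj v u₂)
    (h12 : u₁ ≠ u₂) (p : T.Walk u₁ x) (hp : v ∉ p.support)
    (q : T.Walk u₂ x) (hq : v ∉ q.support) : False := by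
  have hvr : v ∉ (p.append q.reverse).support := by
    rw [Walk.mem_support_append_iff]
    push_neg
    exact ⟨hp, by rwa [Walk.support_reverse, List.mem_reverse]⟩
  set r := (p.append q.reverse).toPath with hr
  have hvr' : v ∉ (r : T.Walk u₁ u₂).support :=
    fun h => hvr (Walk.support_toPath_subset _ h)
  have hq1 : (Walk.cons hu1 (r : T.Walk u₁ u₂)).IsPath := by
    rw [Walk.cons_isPath_iff]
    exact ⟨r.2, hvr'⟩
  have hq2 : (Walk.cons hu2 Walk.nil : T.Walk v u₂).IsPath := by
    simp [Walk.isPath_def, hu2.ne]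
  have heq := path_unique hT _ _ hq1 hq2
  have hlen := congrArg Walk.length heq
  simp only [Walk.length_cons, Walk.length_nil] at hlen
  exact h12 (Walk.eq_of_length_eq_zero (p := (r : T.Walk u₁ u₂)) (by omega))

/-- cross-component: distinct and non-adjacent -/
lemma cross (hT : T.IsTree) {v u₁ u₂ x y : α} (hu1 : T.Adj v u₁) (hu2 : T.Adj v u₂)
    (h12 : u₁ ≠ u₂) (hx : ∃ p : T.Walk u₁ x, v ∉ p.support)
    (hy : ∃ q : T.Walk u₂ y, v ∉ q.support) : x ≠ y ∧ ¬ T.Adj x y := by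
  obtain ⟨p, hp⟩ := hx
  obtain ⟨q, hq⟩ := hy
  constructor
  · rintro rfl
    exact comp_disj hT hu1 hu2 h12 p hp q hq
  · intro hadj
    have hyv : y ∉ ({v} : Set α) := by
      intro h
      simp at h
      subst h
      exact hq (Walk.end_mem_support q)
    have : v ∉ (p.append (Walk.cons hadj Walk.nil)).support := by
      rw [Walk.mem_support_append_iff]
      push_neg
      refine ⟨hp, ?_⟩
      simp only [Walk.support_cons, Walk.support_nil]
      intro h
      rcases List.mem_pair.mp h with h | h
      · exact hp (h ▸ Walk.end_mem_support p)
      · exact hyv (by simp [h])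
    exact comp_disj hT hu1 hu2 h12 _ this q hq

lemma get_leg_aux (hT : T.IsTree) {v u x : α} (hu : T.Adj v u)
    (hw : ∃ p : T.Walk u x, v ∉ p.support) (hxu : x ≠ u) (hnadj : ¬ T.Adj u x) :
    ∃ a b, T.Adj u a ∧ T.Adj a b ∧ b ≠ u ∧
      (∃ p : T.Walk u a, v ∉ p.support) ∧ (∃ p : T.Walk u b, v ∉ p.support) := by
  obtain ⟨p0, hp0⟩ := hw
  have hq : (p0.toPath : T.Walk u x).IsPath := p0.toPath.2
  have hqv : v ∉ (p0.toPath : T.Walk u x).support :=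
    fun h => hp0 (Walk.support_toPath_subset _ h)
  set q := (p0.toPath : T.Walk u x) with hqdef
  clear_value q
  clear hqdef hp0
  cases q with
  | nil => exact absurd rfl hxu
  | @cons _ c _ h1 q' =>
    cases q' with
    | nil => exact absurd h1 hnadj
    | @cons _ d _ h2 q'' =>
      refine ⟨c, d, h1, h2, ?_, ?_, ?_⟩
      · -- d ≠ u from path nodup
        intro hdu
        rw [Walk.cons_isPath_iff] at hq
        apply hq.2
        rw [Walk.support_cons]
        right
        rw [← hdu]
        exact Walk.start_mem_support q''
      · refine ⟨Walk.cons h1 Walk.nil, ?_⟩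
        simp only [Walk.support_cons, Walk.support_nil]
        intro h
        rcases List.mem_pair.mp h with h | h
        · exact (hu.ne' h.symm).elim
        · apply hqv; rw [h]; simp [Walk.support_cons]
      · refine ⟨Walk.cons h1 (Walk.cons h2 Walk.nil), ?_⟩
        simp only [Walk.support_cons, Walk.support_nil]
        intro h
        simp only [List.mem_cons, List.not_mem_nil] at h
        rcases h with h | h | h | h
        · exact hu.ne' h.symm
        · apply hqv; rw [h]; simp [Walk.support_cons]
        · apply hqv; rw [h]
          simp only [Walk.support_cons, List.mem_cons]
          right; right
          exact Walk.start_mem_support q''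
        · exact h.elim

/-- From a bad component, extract a path pattern v-u-a-b with all the
adjacency/non-adjacency facts. -/
lemma get_leg (hT : T.IsTree) {v u : α} (hu : T.Adj v u) (hbad : ¬ IsGoodComp T v u) :
    ∃ a b, T.Adj u a ∧ T.Adj a b ∧ ¬ T.Adj v a ∧ ¬ T.Adj v b ∧ ¬ T.Adj u b ∧
      v ≠ u ∧ v ≠ a ∧ v ≠ b ∧ u ≠ a ∧ u ≠ b ∧ a ≠ b ∧
      (∃ p : T.Walk u a, v ∉ p.support) ∧ (∃ p : T.Walk u b, v ∉ p.support) := by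
  have key : ∃ a b, T.Adj u a ∧ T.Adj a b ∧ b ≠ u ∧
      (∃ p : T.Walk u a, v ∉ p.support) ∧ (∃ p : T.Walk u b, v ∉ p.support) := by
    rw [IsGoodComp, not_and_or] at hbad
    rcases hbad with hbad | hbad
    · push_neg at hbad
      obtain ⟨x, hwx, hx⟩ := hbad
      exact get_leg_aux hT hu hwx hx.1 hx.2
    · push_neg at hbad
      obtain ⟨x, y, hwx, hwy, hxu, hyu, hadj⟩ := hbad
      by_cases hux : T.Adj u x
      · by_cases huy : T.Adj u y
        · exact (no_triangle hT hux hadj huy).elim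
        · exact get_leg_aux hT hu hwy hyu huy
      · exact get_leg_aux hT hu hwx hxu hux
  obtain ⟨a, b, hua, hab, hbu, hwa, hwb⟩ := key
  have hva : v ≠ a := by
    obtain ⟨p, hp⟩ := hwa
    intro h
    exact hp (h ▸ Walk.end_mem_support p)
  have hvb : v ≠ b := by
    obtain ⟨p, hp⟩ := hwb
    intro h
    exact hp (h ▸ Walk.end_mem_support p)
  have hnva : ¬ T.Adj v a := fun h => no_triangle hT hu hua h
  have hnub : ¬ T.Adj u b := fun h => no_triangle hT hua hab h
  have hnvb : ¬ T.Adj v b := fun h => no_square hT hu hua hab h hva (fun h' => hbu h'.symm)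
  exact ⟨a, b, hua, hab, hnva, hnvb, hnub, hu.ne, hva, hvb, hua.ne,
    fun h' => hbu h'.symm, hab.ne, hwa, hwb⟩


end Graph


/-- Adjacency criterion in terms of labels and first/last positions. -/
def Ecrit (lx Fx Lx ly Fy Ly : ℕ) : Prop :=
  (lx < ly ∧ Ly < Fx) ∨ (ly < lx ∧ Lx < Fy)

lemma shape {lv Fv Lv lu Fu Lu la Fa La lb Fb Lb : ℕ}
    (hv : Fv ≤ Lv) (hu : Fu ≤ Lu) (ha : Fa ≤ La) (hb : Fb ≤ Lb)
    (hvu : Ecrit lv Fv Lv lu Fu Lu) (hua : Ecrit lu Fu Lu la Fa La)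
    (hab : Ecrit la Fa La lb Fb Lb)
    (hva : ¬ Ecrit lv Fv Lv la Fa La) (hvb : ¬ Ecrit lv Fv Lv lb Fb Lb)
    (hub : ¬ Ecrit lu Fu Lu lb Fb Lb) :
    (lu < lv ∧ lu < la ∧ lb < la ∧ Lv < Fu ∧ La < Fu ∧ La < Fb) ∨
      (lv < lu ∧ la < lu ∧ la < lb ∧ Lu < Fv ∧ Lu < Fa ∧ Lb < Fa) := by
  unfold Ecrit at *
  omega

lemma legAB {lv Fv Lv lu1 Fu1 Lu1 la1 La1 lb1 Fb1
    lu2 Fu2 Lu2 la2 Fa2 lb2 Lb2 : ℕ}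
    (hv : Fv ≤ Lv)
    (h1 : lu1 < lv ∧ lu1 < la1 ∧ lb1 < la1 ∧ Lv < Fu1 ∧ La1 < Fu1 ∧ La1 < Fb1)
    (h2 : lv < lu2 ∧ la2 < lu2 ∧ la2 < lb2 ∧ Lu2 < Fv ∧ Lu2 < Fa2 ∧ Lb2 < Fa2)
    (hn : ¬ Ecrit lu1 Fu1 Lu1 lu2 Fu2 Lu2) : False := by
  unfold Ecrit at *
  omega

lemma legAAA {lv Fv Lv lu1 Fu1 Lu1 la1 Fa1 La1 lb1 Fb1 Lb1
    lu2 Fu2 Lu2 la2 Fa2 La2 lb2 Fb2 Lb2 lu3 Fu3 Lu3 la3 Fa3 La3 lb3 Fb3 Lb3 : ℕ}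
    (h1 : lu1 < lv ∧ lu1 < la1 ∧ lb1 < la1 ∧ Lv < Fu1 ∧ La1 < Fu1 ∧ La1 < Fb1)
    (h2 : lu2 < lv ∧ lu2 < la2 ∧ lb2 < la2 ∧ Lv < Fu2 ∧ La2 < Fu2 ∧ La2 < Fb2)
    (h3 : lu3 < lv ∧ lu3 < la3 ∧ lb3 < la3 ∧ Lv < Fu3 ∧ La3 < Fu3 ∧ La3 < Fb3)
    (h12 : ¬ Ecrit la1 Fa1 La1 lu2 Fu2 Lu2) (h21 : ¬ Ecrit la2 Fa2 La2 lu1 Fu1 Lu1)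
    (h13 : ¬ Ecrit la1 Fa1 La1 lu3 Fu3 Lu3) (h31 : ¬ Ecrit la3 Fa3 La3 lu1 Fu1 Lu1)
    (h23 : ¬ Ecrit la2 Fa2 La2 lu3 Fu3 Lu3) (h32 : ¬ Ecrit la3 Fa3 La3 lu2 Fu2 Lu2)
    (hb1 : ¬ Ecrit lv Fv Lv lb1 Fb1 Lb1) (hb2 : ¬ Ecrit lv Fv Lv lb2 Fb2 Lb2)
    (hb3 : ¬ Ecrit lv Fv Lv lb3 Fb3 Lb3)
    (hne12 : la1 ≠ lu2) (hne21 : la2 ≠ lu1) (hne13 : la1 ≠ lu3) (hne31 : la3 ≠ lu1)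
    (hne23 : la2 ≠ lu3) (hne32 : la3 ≠ lu2)
    (hnb1 : lb1 ≠ lv) (hnb2 : lb2 ≠ lv) (hnb3 : lb3 ≠ lv) : False := by
  unfold Ecrit at *
  -- tournament: define dij := luj < lai
  -- step2: luj < lai → Fuj ≤ Lai < Fui
  obtain ⟨_, _, _, hLv1, hLa1, hFb1⟩ := h1
  obtain ⟨_, _, _, hLv2, hLa2, hFb2⟩ := h2
  obtain ⟨_, _, _, hLv3, hLa3, hFb3⟩ := h3
  omega



lemma legBBB {lv Fv Lv lu1 Fu1 Lu1 la1 Fa1 La1 lb1 Fb1 Lb1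
    lu2 Fu2 Lu2 la2 Fa2 La2 lb2 Fb2 Lb2 lu3 Fu3 Lu3 la3 Fa3 La3 lb3 Fb3 Lb3 : ℕ}
    (h1 : lv < lu1 ∧ la1 < lu1 ∧ la1 < lb1 ∧ Lu1 < Fv ∧ Lu1 < Fa1 ∧ Lb1 < Fa1)
    (h2 : lv < lu2 ∧ la2 < lu2 ∧ la2 < lb2 ∧ Lu2 < Fv ∧ Lu2 < Fa2 ∧ Lb2 < Fa2)
    (h3 : lv < lu3 ∧ la3 < lu3 ∧ la3 < lb3 ∧ Lu3 < Fv ∧ Lu3 < Fa3 ∧ Lb3 < Fa3)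
    (h12 : ¬ Ecrit la1 Fa1 La1 lu2 Fu2 Lu2) (h21 : ¬ Ecrit la2 Fa2 La2 lu1 Fu1 Lu1)
    (h13 : ¬ Ecrit la1 Fa1 La1 lu3 Fu3 Lu3) (h31 : ¬ Ecrit la3 Fa3 La3 lu1 Fu1 Lu1)
    (h23 : ¬ Ecrit la2 Fa2 La2 lu3 Fu3 Lu3) (h32 : ¬ Ecrit la3 Fa3 La3 lu2 Fu2 Lu2)
    (hb1 : ¬ Ecrit lv Fv Lv lb1 Fb1 Lb1) (hb2 : ¬ Ecrit lv Fv Lv lb2 Fb2 Lb2)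
    (hb3 : ¬ Ecrit lv Fv Lv lb3 Fb3 Lb3)
    (hne12 : la1 ≠ lu2) (hne21 : la2 ≠ lu1) (hne13 : la1 ≠ lu3) (hne31 : la3 ≠ lu1)
    (hne23 : la2 ≠ lu3) (hne32 : la3 ≠ lu2)
    (hnb1 : lb1 ≠ lv) (hnb2 : lb2 ≠ lv) (hnb3 : lb3 ≠ lv) : False := by
  unfold Ecrit at *
  obtain ⟨_, _, _, hA1, hB1, hC1⟩ := h1
  obtain ⟨_, _, _, hA2, hB2, hC2⟩ := h2
  obtain ⟨_, _, _, hA3, hB3, hC3⟩ := h3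
  omega

lemma adj_iff {α : Type*} [Fintype α] {T : SimpleGraph α} {ℓ : α → ℕ} {w : List ℕ}
    (hrep : Rep12L T ℓ w) {x y : α} (hxy : x ≠ y) :
    T.Adj x y ↔ Ecrit (ℓ x) (Fi w (ℓ x)) (Li w (ℓ x)) (ℓ y) (Fi w (ℓ y)) (Li w (ℓ y)) := by
  obtain ⟨hinj, hmem, -, hcrit⟩ := hrep
  have hl : ℓ x ≠ ℓ y := fun h => hxy (hinj h)
  rcases Nat.lt_or_ge (ℓ x) (ℓ y) with h | h
  · rw [hcrit x y hxy, char h (hmem x) (hmem y)]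
    unfold Ecrit
    omega
  · have h' : ℓ y < ℓ x := by omega
    rw [SimpleGraph.adj_comm, hcrit y x hxy.symm, char h' (hmem y) (hmem x)]
    unfold Ecrit
    omega

end Stmt17

/-- if a labeled tree `T` is 12-representable, then for every vertex
`v`, at most two of the components of `T ∖ v` fail to be good. -/
theorem stmt_17 {α : Type*} [Fintype α] [DecidableEq α]
    (T : SimpleGraph α) (hT : T.IsTree) (ℓ : α → ℕ)
    (w : List ℕ) (hrep : Rep12L T ℓ w) (v : α) :
    ∃ S : Finset α, S.card ≤ 2 ∧
      ∀ u : α, T.Adj v u → u ∉ S → IsGoodComp T v u := by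
  classical
  by_contra hcon
  push_neg at hcon
  obtain ⟨u₁, hadj₁, -, hbad₁⟩ := hcon ∅ (by simp)
  obtain ⟨u₂, hadj₂, hmem₂, hbad₂⟩ := hcon {u₁} (by simp)
  obtain ⟨u₃, hadj₃, hmem₃, hbad₃⟩ := hcon {u₁, u₂}
    (le_trans (Finset.card_insert_le _ _) (by simp))
  have h12 : u₁ ≠ u₂ := fun h => hmem₂ (by simp [h])
  have h13 : u₁ ≠ u₃ := fun h => hmem₃ (by simp [h])
  have h23 : u₂ ≠ u₃ := fun h => hmem₃ (by simp [h])
  obtain ⟨a₁, b₁, hua₁, hab₁, hnva₁, hnvb₁, hnub₁, hvu₁, hva₁, hvb₁, hau₁, hub₁, habn₁,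
    hwa₁, hwb₁⟩ := Stmt17.get_leg hT hadj₁ hbad₁
  obtain ⟨a₂, b₂, hua₂, hab₂, hnva₂, hnvb₂, hnub₂, hvu₂, hva₂, hvb₂, hau₂, hub₂, habn₂,
    hwa₂, hwb₂⟩ := Stmt17.get_leg hT hadj₂ hbad₂
  obtain ⟨a₃, b₃, hua₃, hab₃, hnva₃, hnvb₃, hnub₃, hvu₃, hva₃, hvb₃, hau₃, hub₃, habn₃,
    hwa₃, hwb₃⟩ := Stmt17.get_leg hT hadj₃ hbad₃
  -- reachability of the roots
  have Ru₁ : ∃ p : T.Walk u₁ u₁, v ∉ p.support := ⟨SimpleGraph.Walk.nil, by simp [hadj₁.ne]⟩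
  have Ru₂ : ∃ p : T.Walk u₂ u₂, v ∉ p.support := ⟨SimpleGraph.Walk.nil, by simp [hadj₂.ne]⟩
  have Ru₃ : ∃ p : T.Walk u₃ u₃, v ∉ p.support := ⟨SimpleGraph.Walk.nil, by simp [hadj₃.ne]⟩
  have hinj := hrep.1
  have hFL : ∀ x : α, Stmt17.Fi w (ℓ x) ≤ Stmt17.Li w (ℓ x) :=
    fun x => Stmt17.Fi_le_Li (hrep.2.1 x)
  -- in-leg translated facts
  have Evu₁ := (Stmt17.adj_iff hrep hvu₁).1 hadj₁
  have Evu₂ := (Stmt17.adj_iff hrep hvu₂).1 hadj₂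
  have Evu₃ := (Stmt17.adj_iff hrep hvu₃).1 hadj₃
  have Eua₁ := (Stmt17.adj_iff hrep hau₁).1 hua₁
  have Eua₂ := (Stmt17.adj_iff hrep hau₂).1 hua₂
  have Eua₃ := (Stmt17.adj_iff hrep hau₃).1 hua₃
  have Eab₁ := (Stmt17.adj_iff hrep habn₁).1 hab₁
  have Eab₂ := (Stmt17.adj_iff hrep habn₂).1 hab₂
  have Eab₃ := (Stmt17.adj_iff hrep habn₃).1 hab₃
  have Nva₁ := fun h => hnva₁ ((Stmt17.adj_iff hrep hva₁).2 h)
  have Nva₂ := fun h => hnva₂ ((Stmt17.adj_iff hrep hva₂).2 h)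
  have Nva₃ := fun h => hnva₃ ((Stmt17.adj_iff hrep hva₃).2 h)
  have Nvb₁ := fun h => hnvb₁ ((Stmt17.adj_iff hrep hvb₁).2 h)
  have Nvb₂ := fun h => hnvb₂ ((Stmt17.adj_iff hrep hvb₂).2 h)
  have Nvb₃ := fun h => hnvb₃ ((Stmt17.adj_iff hrep hvb₃).2 h)
  have Nub₁ := fun h => hnub₁ ((Stmt17.adj_iff hrep hub₁).2 h)
  have Nub₂ := fun h => hnub₂ ((Stmt17.adj_iff hrep hub₂).2 h)
  have Nub₃ := fun h => hnub₃ ((Stmt17.adj_iff hrep hub₃).2 h)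
  -- cross-component facts
  obtain ⟨du12, nu12⟩ := Stmt17.cross hT hadj₁ hadj₂ h12 Ru₁ Ru₂
  obtain ⟨du13, nu13⟩ := Stmt17.cross hT hadj₁ hadj₃ h13 Ru₁ Ru₃
  obtain ⟨du23, nu23⟩ := Stmt17.cross hT hadj₂ hadj₃ h23 Ru₂ Ru₃
  obtain ⟨dau12, nau12⟩ := Stmt17.cross hT hadj₁ hadj₂ h12 hwa₁ Ru₂
  obtain ⟨dau21, nau21⟩ := Stmt17.cross hT hadj₂ hadj₁ h12.symm hwa₂ Ru₁
  obtain ⟨dau13, nau13⟩ := Stmt17.cross hT hadj₁ hadj₃ h13 hwa₁ Ru₃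
  obtain ⟨dau31, nau31⟩ := Stmt17.cross hT hadj₃ hadj₁ h13.symm hwa₃ Ru₁
  obtain ⟨dau23, nau23⟩ := Stmt17.cross hT hadj₂ hadj₃ h23 hwa₂ Ru₃
  obtain ⟨dau32, nau32⟩ := Stmt17.cross hT hadj₃ hadj₂ h23.symm hwa₃ Ru₂
  -- translated cross facts
  have Cu12 := fun h => nu12 ((Stmt17.adj_iff hrep du12).2 h)
  have Cu13 := fun h => nu13 ((Stmt17.adj_iff hrep du13).2 h)
  have Cu23 := fun h => nu23 ((Stmt17.adj_iff hrep du23).2 h)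
  have Cu21 := fun h => nu12 (((Stmt17.adj_iff hrep du12.symm).2 h).symm)
  have Cu31 := fun h => nu13 (((Stmt17.adj_iff hrep du13.symm).2 h).symm)
  have Cu32 := fun h => nu23 (((Stmt17.adj_iff hrep du23.symm).2 h).symm)
  have Cau12 := fun h => nau12 ((Stmt17.adj_iff hrep dau12).2 h)
  have Cau21 := fun h => nau21 ((Stmt17.adj_iff hrep dau21).2 h)
  have Cau13 := fun h => nau13 ((Stmt17.adj_iff hrep dau13).2 h)
  have Cau31 := fun h => nau31 ((Stmt17.adj_iff hrep dau31).2 h)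
  have Cau23 := fun h => nau23 ((Stmt17.adj_iff hrep dau23).2 h)
  have Cau32 := fun h => nau32 ((Stmt17.adj_iff hrep dau32).2 h)
  -- label distinctness
  have lau12 : ℓ a₁ ≠ ℓ u₂ := fun h => dau12 (hinj h)
  have lau21 : ℓ a₂ ≠ ℓ u₁ := fun h => dau21 (hinj h)
  have lau13 : ℓ a₁ ≠ ℓ u₃ := fun h => dau13 (hinj h)
  have lau31 : ℓ a₃ ≠ ℓ u₁ := fun h => dau31 (hinj h)
  have lau23 : ℓ a₂ ≠ ℓ u₃ := fun h => dau23 (hinj h)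
  have lau32 : ℓ a₃ ≠ ℓ u₂ := fun h => dau32 (hinj h)
  have lvb1 : ℓ b₁ ≠ ℓ v := fun h => hvb₁ (hinj h.symm)
  have lvb2 : ℓ b₂ ≠ ℓ v := fun h => hvb₂ (hinj h.symm)
  have lvb3 : ℓ b₃ ≠ ℓ v := fun h => hvb₃ (hinj h.symm)
  -- shapes
  have S₁ := Stmt17.shape (hFL v) (hFL u₁) (hFL a₁) (hFL b₁) Evu₁ Eua₁ Eab₁ Nva₁ Nvb₁ Nub₁
  have S₂ := Stmt17.shape (hFL v) (hFL u₂) (hFL a₂) (hFL b₂) Evu₂ Eua₂ Eab₂ Nva₂ Nvb₂ Nub₂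
  have S₃ := Stmt17.shape (hFL v) (hFL u₃) (hFL a₃) (hFL b₃) Evu₃ Eua₃ Eab₃ Nva₃ Nvb₃ Nub₃
  rcases S₁ with s1 | s1 <;> rcases S₂ with s2 | s2 <;> rcases S₃ with s3 | s3
  · exact Stmt17.legAAA s1 s2 s3 Cau12 Cau21 Cau13 Cau31 Cau23 Cau32 Nvb₁ Nvb₂ Nvb₃
      lau12 lau21 lau13 lau31 lau23 lau32 lvb1 lvb2 lvb3
  · exact Stmt17.legAB (hFL v) s1 s3 Cu13
  · exact Stmt17.legAB (hFL v) s1 s2 Cu12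
  · exact Stmt17.legAB (hFL v) s1 s2 Cu12
  · exact Stmt17.legAB (hFL v) s2 s1 Cu21
  · exact Stmt17.legAB (hFL v) s2 s3 Cu23
  · exact Stmt17.legAB (hFL v) s3 s1 Cu31
  · exact Stmt17.legBBB s1 s2 s3 Cau12 Cau21 Cau13 Cau31 Cau23 Cau32 Nvb₁ Nvb₂ Nvb₃
      lau12 lau21 lau13 lau31 lau23 lau32 lvb1 lvb2 lvb3
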